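/- Let X be a Euclidean vector space and a ∈ 𝔬(X) skew-adjoint. Define Π_a = (I − e^{−a})/a ∈ End(X) (interpreted via power series, equal to ∫₀¹ e^{−sa} ds) and the 2-form ϖ_a(ξ₁,ξ₂) = −B((a − sinh a)/a² · ξ₁, ξ₂). Then for every ξ ∈ X, the element (aξ, ξ) ∈ X⊕X* is related to e_{exp(a)}(ξ) = ((I−e^{−a})ξ, (I+e^{−a})ξ/2) under the morphism (Π_a, −ϖ_a). Moreover, this morphism has trivial kernel on the graph Gr_a = {(aξ,ξ)} if and only if Π_a is invertible. -/

import Mathlib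

open RealInnerProductSpace

set_option linter.unusedSectionVars false
set_option synthInstance.maxHeartbeats 1000000
set_option maxHeartbeats 1000000

/-- `Π_a = (I - e^{-a})/a = ∑_{n≥0} (-1)ⁿ aⁿ/(n+1)!`, defined by its power series. -/
noncomputable def PiMap {X : Type*} [NormedAddCommGroup X] [InnerProductSpace ℝ X]
    [FiniteDimensional ℝ X] (a : X →L[ℝ] X) : X →L[ℝ] X :=
  ∑' n : ℕ, (((-1 : ℝ) ^ n / (Nat.factorial (n + 1) : ℝ)) • a ^ n)

/-- `(a - sinh a)/a² = -∑_{k≥0} a^{2k+1}/(2k+3)!`, defined by its power series. -/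
noncomputable def sinhQuot {X : Type*} [NormedAddCommGroup X] [InnerProductSpace ℝ X]
    [FiniteDimensional ℝ X] (a : X →L[ℝ] X) : X →L[ℝ] X :=
  ∑' k : ℕ, ((-(1 : ℝ) / (Nat.factorial (2 * k + 3) : ℝ)) • a ^ (2 * k + 1))

/-- The 2-form `ϖ_a(ξ₁,ξ₂) = -B((a - sinh a)/a² ξ₁, ξ₂)`. -/
noncomputable def varpiForm {X : Type*} [NormedAddCommGroup X] [InnerProductSpace ℝ X]
    [FiniteDimensional ℝ X] (a : X →L[ℝ] X) (ξ₁ ξ₂ : X) : ℝ :=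
  -⟪sinhQuot a ξ₁, ξ₂⟫

/-- The relation defined by the morphism `(Π_a, -ϖ_a)` on `X ⊕ X* ≅ X ⊕ X`:
`(v, α) ∼ (v', α')` iff `v' = Π_a v` and `α = ι_v(-ϖ_a) + Π_a^* α'`. -/
noncomputable def expRel {X : Type*} [NormedAddCommGroup X] [InnerProductSpace ℝ X]
    [FiniteDimensional ℝ X] (a : X →L[ℝ] X) (x y : X × X) : Prop :=
  y.1 = PiMap a x.1 ∧ ∀ u : X, ⟪x.2, u⟫ = -varpiForm a x.1 u + ⟪y.2, PiMap a u⟫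

section Helpers
variable {X : Type*} [NormedAddCommGroup X] [InnerProductSpace ℝ X] [FiniteDimensional ℝ X]
variable (a : X →L[ℝ] X)

private lemma opNorm_pow_le (n : ℕ) : ‖a ^ n‖ ≤ ‖a‖ ^ n := by
  induction n with
  | zero => simpa [ContinuousLinearMap.one_def] using ContinuousLinearMap.norm_id_le
  | succ n ih =>
      rw [pow_succ, pow_succ]
      exact le_trans (norm_mul_le _ _) (mul_le_mul_of_nonneg_right ih (norm_nonneg a))

private lemma inv_fact_le {n m : ℕ} (h : n ≤ m) :
    ((m.factorial : ℝ))⁻¹ ≤ ((n.factorial : ℝ))⁻¹ := by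
  apply inv_anti₀
  · exact_mod_cast Nat.factorial_pos n
  · exact_mod_cast Nat.factorial_le h

private lemma summable_norm_aux (m l : ℕ) (c : ℕ → ℝ) (C : ℝ)
    (hc : ∀ k, |c k| ≤ C / (k.factorial : ℝ)) :
    Summable fun k => ‖c k • a ^ (m * k + l)‖ := by
  have hsum : Summable fun k : ℕ => ‖a‖ ^ l * (C * ((‖a‖ ^ m) ^ k / (k.factorial : ℝ))) :=
    ((Real.summable_pow_div_factorial (‖a‖ ^ m)).mul_left C).mul_left (‖a‖ ^ l)
  refine Summable.of_nonneg_of_le (fun k => norm_nonneg _) (fun k => ?_) hsum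
  rw [@norm_smul ℝ _ _ _ _ _ (c k) (a ^ (m * k + l)), Real.norm_eq_abs]
  have h1 : ‖a ^ (m * k + l)‖ ≤ ‖a‖ ^ l * (‖a‖ ^ m) ^ k := by
    calc ‖a ^ (m * k + l)‖ ≤ ‖a‖ ^ (m * k + l) := opNorm_pow_le a _
      _ = ‖a‖ ^ l * (‖a‖ ^ m) ^ k := by rw [pow_add, ← pow_mul, mul_comm]
  calc |c k| * ‖a ^ (m * k + l)‖
      ≤ (C / (k.factorial : ℝ)) * (‖a‖ ^ l * (‖a‖ ^ m) ^ k) :=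
        mul_le_mul (hc k) h1 (norm_nonneg _) (le_trans (abs_nonneg _) (hc k))
    _ = ‖a‖ ^ l * (C * ((‖a‖ ^ m) ^ k / (k.factorial : ℝ))) := by ring

private lemma summable_aux (m l : ℕ) (c : ℕ → ℝ) (C : ℝ)
    (hc : ∀ k, |c k| ≤ C / (k.factorial : ℝ)) :
    Summable fun k => c k • a ^ (m * k + l) :=
  (summable_norm_aux a m l c C hc).of_norm


private lemma tsum_apply_aux {f : ℕ → X →L[ℝ] X} (hf : Summable f) (v : X) :
    (∑' n, f n) v = ∑' n, f n v := by
  simpa using (ContinuousLinearMap.apply ℝ X v).map_tsum hf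

private lemma summable_apply_aux {f : ℕ → X →L[ℝ] X} (hf : Summable f) (v : X) :
    Summable fun n => f n v := by
  simpa [Function.comp_def] using hf.map (ContinuousLinearMap.apply ℝ X v)
    (ContinuousLinearMap.apply ℝ X v).continuous

private lemma inner_tsum_aux {g : ℕ → X} (hg : Summable g) (w : X) :
    ⟪w, ∑' n, g n⟫ = ∑' n, ⟪w, g n⟫ := by
  simpa using (innerSL ℝ w).map_tsum hg

private lemma commute_series (b : X →L[ℝ] X) (d : X →L[ℝ] X) (h : Commute b d)
    (c : ℕ → ℝ) (hs : Summable fun n => c n • d ^ n) :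
    Commute b (∑' n, c n • d ^ n) := by
  have hterm : ∀ n, b * (c n • d ^ n) = (c n • d ^ n) * b := fun n =>
    ((h.pow_right n).smul_right (c n)).eq
  show b * _ = _ * b
  rw [← hs.tsum_mul_left b, ← hs.tsum_mul_right b]
  exact tsum_congr hterm


-- Specific summability instances
private lemma abs_div_fact_le {x C : ℝ} (hx : |x| ≤ C) {n m : ℕ} (hnm : n ≤ m) :
    |x / (Nat.factorial m : ℝ)| ≤ C / (Nat.factorial n : ℝ) := by
  rw [abs_div, abs_of_nonneg (by positivity : (0:ℝ) ≤ (Nat.factorial m : ℝ))]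
  exact div_le_div₀ (le_trans (abs_nonneg x) hx) hx
    (by exact_mod_cast Nat.factorial_pos n) (by exact_mod_cast Nat.factorial_le hnm)

private lemma abs_neg_one_pow_le (k : ℕ) : |(-1:ℝ) ^ k| ≤ 1 := by
  rw [abs_pow, abs_neg, abs_one, one_pow]

private lemma S_pi : Summable fun n : ℕ => ((-1:ℝ) ^ n / (Nat.factorial (n+1) : ℝ)) • a ^ n := by
  simpa using summable_aux a 1 0 (fun n => (-1:ℝ) ^ n / (Nat.factorial (n+1) : ℝ)) 1
    (fun k => abs_div_fact_le (abs_neg_one_pow_le k) (Nat.le_succ k))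

private lemma S_pi_mul : Summable fun n : ℕ => ((-1:ℝ) ^ n / (Nat.factorial (n+1) : ℝ)) • a ^ (n+1) := by
  simpa using summable_aux a 1 1 (fun n => (-1:ℝ) ^ n / (Nat.factorial (n+1) : ℝ)) 1
    (fun k => abs_div_fact_le (abs_neg_one_pow_le k) (Nat.le_succ k))

private lemma S_exp_shift : Summable fun n : ℕ => ((-1:ℝ) ^ (n+1) / (Nat.factorial (n+1) : ℝ)) • a ^ (n+1) := by
  simpa using summable_aux a 1 1 (fun n => (-1:ℝ) ^ (n+1) / (Nat.factorial (n+1) : ℝ)) 1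
    (fun k => abs_div_fact_le (abs_neg_one_pow_le (k+1)) (Nat.le_succ k))

private lemma S_pineg : Summable fun n : ℕ => ((1:ℝ) / (Nat.factorial (n+1) : ℝ)) • a ^ n := by
  simpa using summable_aux a 1 0 (fun n => (1:ℝ) / (Nat.factorial (n+1) : ℝ)) 1
    (fun k => abs_div_fact_le (by rw [abs_one]) (Nat.le_succ k))

private lemma S_pineg_norm : Summable fun n : ℕ => ‖((1:ℝ) / (Nat.factorial (n+1) : ℝ)) • a ^ n‖ := by
  simpa using summable_norm_aux a 1 0 (fun n => (1:ℝ) / (Nat.factorial (n+1) : ℝ)) 1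
    (fun k => abs_div_fact_le (by rw [abs_one]) (Nat.le_succ k))

private lemma S_exp : Summable fun n : ℕ => ((-1:ℝ) ^ n / (Nat.factorial n : ℝ)) • a ^ n := by
  simpa using summable_aux a 1 0 (fun n => (-1:ℝ) ^ n / (Nat.factorial n : ℝ)) 1
    (fun k => abs_div_fact_le (abs_neg_one_pow_le k) le_rfl)

private lemma S_exp_norm : Summable fun n : ℕ => ‖((-1:ℝ) ^ n / (Nat.factorial n : ℝ)) • a ^ n‖ := by
  simpa using summable_norm_aux a 1 0 (fun n => (-1:ℝ) ^ n / (Nat.factorial n : ℝ)) 1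
    (fun k => abs_div_fact_le (abs_neg_one_pow_le k) le_rfl)

private lemma S_q : Summable fun k : ℕ => ((1:ℝ) / (Nat.factorial (2*k+1) : ℝ)) • a ^ (2*k) := by
  simpa using summable_aux a 2 0 (fun k => (1:ℝ) / (Nat.factorial (2*k+1) : ℝ)) 1
    (fun k => abs_div_fact_le (by rw [abs_one]) (by omega))

private lemma S_q_shift : Summable fun k : ℕ => ((1:ℝ) / (Nat.factorial (2*k+3) : ℝ)) • a ^ (2*k+2) := by
  simpa using summable_aux a 2 2 (fun k => (1:ℝ) / (Nat.factorial (2*k+3) : ℝ)) 1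
    (fun k => abs_div_fact_le (by rw [abs_one]) (by omega))

private lemma S_sinh : Summable fun k : ℕ => (-(1:ℝ) / (Nat.factorial (2*k+3) : ℝ)) • a ^ (2*k+1) := by
  simpa using summable_aux a 2 1 (fun k => -(1:ℝ) / (Nat.factorial (2*k+3) : ℝ)) 1
    (fun k => abs_div_fact_le (by rw [abs_neg, abs_one]) (by omega))

private lemma S_comb : Summable fun n : ℕ => (((-1:ℝ) ^ n + 1) / (Nat.factorial (n+1) : ℝ)) • a ^ n := by
  simpa using summable_aux a 1 0 (fun n => ((-1:ℝ) ^ n + 1) / (Nat.factorial (n+1) : ℝ)) 2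
    (fun k => abs_div_fact_le
      (le_trans (abs_add_le _ _) (by have := abs_neg_one_pow_le k; rw [abs_one]; linarith))
      (Nat.le_succ k))

private lemma S_combE : Summable fun k : ℕ => (((-1:ℝ) ^ (2*k) + 1) / (Nat.factorial (2*k+1) : ℝ)) • a ^ (2*k) := by
  simpa using summable_aux a 2 0 (fun k => ((-1:ℝ) ^ (2*k) + 1) / (Nat.factorial (2*k+1) : ℝ)) 2
    (fun k => abs_div_fact_le
      (le_trans (abs_add_le _ _) (by have := abs_neg_one_pow_le (2*k); rw [abs_one]; linarith))
      (by omega))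

end Helpers


section Identities
variable {X : Type*} [NormedAddCommGroup X] [InnerProductSpace ℝ X] [FiniteDimensional ℝ X]
variable (a : X →L[ℝ] X)

private noncomputable def Qop : X →L[ℝ] X :=
  ∑' k : ℕ, ((1:ℝ) / (Nat.factorial (2*k+1) : ℝ)) • a ^ (2*k)

private lemma piMap_neg_eq : PiMap (-a) = ∑' n : ℕ, ((1:ℝ) / (Nat.factorial (n+1) : ℝ)) • a ^ n := by
  rw [PiMap]
  apply tsum_congr; intro n
  rw [← neg_one_smul ℝ a, smul_pow, smul_smul]
  congr 1
  have h : ((-1:ℝ)) ^ n * (-1) ^ n = 1 := by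
    rw [← pow_add]; exact Even.neg_one_pow ⟨n, rfl⟩
  calc ((-1:ℝ) ^ n / (Nat.factorial (n+1) : ℝ)) * (-1) ^ n
      = ((-1:ℝ) ^ n * (-1) ^ n) / (Nat.factorial (n+1) : ℝ) := by ring
    _ = 1 / (Nat.factorial (n+1) : ℝ) := by rw [h]

private lemma exp_neg_eq :
    NormedSpace.exp (-a) = ∑' n : ℕ, ((-1:ℝ) ^ n / (Nat.factorial n : ℝ)) • a ^ n := by
  rw [NormedSpace.exp_eq_tsum (𝕂 := ℝ)]
  apply tsum_congr; intro n
  rw [← neg_one_smul ℝ a, smul_pow, smul_smul]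
  congr 1
  ring

private lemma pi_mul_a : PiMap a * a = 1 - NormedSpace.exp (-a) := by
  have h1 : PiMap a * a = ∑' n : ℕ, ((-1:ℝ) ^ n / (Nat.factorial (n+1) : ℝ)) • a ^ (n+1) := by
    rw [PiMap, ← (S_pi a).tsum_mul_right a]
    apply tsum_congr; intro n
    rw [smul_mul_assoc, ← pow_succ]
  have h2 : NormedSpace.exp (-a)
      = 1 + ∑' n : ℕ, ((-1:ℝ) ^ (n+1) / (Nat.factorial (n+1) : ℝ)) • a ^ (n+1) := by
    rw [exp_neg_eq, Summable.tsum_eq_zero_add (S_exp a)]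
    congr 1
    simp
  rw [h1, h2, sub_add_cancel_left, ← tsum_neg]
  apply tsum_congr; intro n
  rw [← neg_smul]
  congr 1
  rw [pow_succ]
  ring

private lemma pi_add_pineg : PiMap a + PiMap (-a) = Qop a + Qop a := by
  have h1 : PiMap a + PiMap (-a)
      = ∑' n : ℕ, (((-1:ℝ) ^ n + 1) / (Nat.factorial (n+1) : ℝ)) • a ^ n := by
    rw [PiMap, piMap_neg_eq, ← Summable.tsum_add (S_pi a) (S_pineg a)]
    apply tsum_congr; intro n
    rw [← add_smul]
    congr 1
    ring
  have hodd : ∀ k : ℕ,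
      (((-1:ℝ) ^ (2*k+1) + 1) / (Nat.factorial (2*k+1+1) : ℝ)) • a ^ (2*k+1) = 0 := by
    intro k
    have : ((-1:ℝ)) ^ (2*k+1) = -1 := Odd.neg_one_pow ⟨k, by ring⟩
    rw [this]
    norm_num
  have hOsum : Summable fun k : ℕ =>
      (((-1:ℝ) ^ (2*k+1) + 1) / (Nat.factorial (2*k+1+1) : ℝ)) • a ^ (2*k+1) := by
    have : (fun k : ℕ => (((-1:ℝ) ^ (2*k+1) + 1) / (Nat.factorial (2*k+1+1) : ℝ)) • a ^ (2*k+1))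
        = fun _ => 0 := funext hodd
    rw [this]; exact summable_zero
  have h2 := tsum_even_add_odd (f := fun n : ℕ =>
      (((-1:ℝ) ^ n + 1) / (Nat.factorial (n+1) : ℝ)) • a ^ n) (S_combE a) hOsum
  rw [h1, ← h2]
  have h3 : ∑' k : ℕ, (((-1:ℝ) ^ (2*k+1) + 1) / (Nat.factorial (2*k+1+1) : ℝ)) • a ^ (2*k+1)
      = 0 := by
    rw [tsum_congr hodd]; exact tsum_zero
  rw [h3, add_zero, Qop, ← Summable.tsum_add (S_q a) (S_q a)]
  apply tsum_congr; intro k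
  rw [← add_smul]
  congr 1
  have h4 : ((-1:ℝ)) ^ (2*k) = 1 := Even.neg_one_pow ⟨k, by ring⟩
  rw [h4]
  ring

private lemma sinh_mul_a : sinhQuot a * a = 1 - Qop a := by
  have h1 : sinhQuot a * a = ∑' k : ℕ, (-(1:ℝ) / (Nat.factorial (2*k+3) : ℝ)) • a ^ (2*k+2) := by
    rw [sinhQuot, ← (S_sinh a).tsum_mul_right a]
    apply tsum_congr; intro k
    rw [smul_mul_assoc, ← pow_succ]
  have h2 : Qop a = 1 + ∑' k : ℕ, ((1:ℝ) / (Nat.factorial (2*k+3) : ℝ)) • a ^ (2*k+2) := by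
    have e1 : ∑' b : ℕ, ((1:ℝ) / (Nat.factorial (2*(b+1)+1) : ℝ)) • a ^ (2*(b+1))
        = ∑' k : ℕ, ((1:ℝ) / (Nat.factorial (2*k+3) : ℝ)) • a ^ (2*k+2) :=
      tsum_congr (fun b => by rw [show 2*(b+1) = 2*b+2 from by ring])
    rw [Qop, Summable.tsum_eq_zero_add (S_q a), e1]
    norm_num
  rw [h1, h2, sub_add_cancel_left, ← tsum_neg]
  apply tsum_congr; intro k
  rw [← neg_smul]
  congr 1
  ring

end Identities



section Cauchy
variable {X : Type*} [NormedAddCommGroup X] [InnerProductSpace ℝ X] [FiniteDimensional ℝ X]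
variable (a : X →L[ℝ] X)

private lemma alt_choose_sum (n : ℕ) :
    ∑ k ∈ Finset.range (n+1), (-1:ℝ) ^ k * (((n+1).choose (k+1) : ℕ) : ℝ) = 1 := by
  have h0 := Int.alternating_sum_range_choose (n := n+1)
  rw [if_neg (Nat.succ_ne_zero n)] at h0
  have h1 := congrArg (fun z : ℤ => (z : ℝ)) h0
  push_cast at h1
  rw [Finset.sum_range_succ' (fun m => (-1:ℝ) ^ m * (((n+1).choose m : ℕ) : ℝ)) (n+1)] at h1
  simp only [pow_zero, one_mul, Nat.choose_zero_right, Nat.cast_one] at h1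
  have h2 : ∑ k ∈ Finset.range (n+1), (-1:ℝ) ^ (k+1) * (((n+1).choose (k+1) : ℕ) : ℝ)
      = - ∑ k ∈ Finset.range (n+1), (-1:ℝ) ^ k * (((n+1).choose (k+1) : ℕ) : ℝ) := by
    rw [← Finset.sum_neg_distrib]
    apply Finset.sum_congr rfl
    intro k _
    rw [pow_succ]
    ring
  rw [h2] at h1
  linarith

private lemma scalar_id (n : ℕ) :
    ∑ p ∈ Finset.HasAntidiagonal.antidiagonal n,
      ((1:ℝ) / (Nat.factorial (p.1+1) : ℝ)) * ((-1:ℝ) ^ p.2 / (Nat.factorial p.2 : ℝ))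
      = (-1:ℝ) ^ n / (Nat.factorial (n+1) : ℝ) := by
  have key : ∀ k ∈ Finset.range (n+1),
      ((1:ℝ) / (Nat.factorial (k+1) : ℝ)) * ((-1:ℝ) ^ (n-k) / (Nat.factorial (n-k) : ℝ))
      = ((-1:ℝ) ^ n / (Nat.factorial (n+1) : ℝ)) * ((-1:ℝ) ^ k * (((n+1).choose (k+1) : ℕ) : ℝ)) := by
    intro k hk
    have hkn : k ≤ n := Nat.lt_succ_iff.mp (Finset.mem_range.mp hk)
    have hs : (-1:ℝ) ^ (n-k) * (-1) ^ k = (-1) ^ n := by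
      rw [← pow_add, Nat.sub_add_cancel hkn]
    have hsq : (-1:ℝ) ^ k * (-1) ^ k = 1 := by
      rw [← pow_add]; exact Even.neg_one_pow ⟨k, rfl⟩
    have hns : (-1:ℝ) ^ (n-k) = (-1) ^ n * (-1) ^ k := by
      calc (-1:ℝ) ^ (n-k) = (-1) ^ (n-k) * ((-1) ^ k * (-1) ^ k) := by rw [hsq, mul_one]
        _ = ((-1) ^ (n-k) * (-1) ^ k) * (-1) ^ k := by ring
        _ = (-1) ^ n * (-1) ^ k := by rw [hs]
    have hc : (((n+1).choose (k+1) : ℕ) : ℝ)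
        = (Nat.factorial (n+1) : ℝ) / ((Nat.factorial (k+1) : ℝ) * (Nat.factorial (n-k) : ℝ)) := by
      rw [Nat.cast_choose ℝ (by omega : k+1 ≤ n+1), Nat.succ_sub_succ]
    have f1 : (Nat.factorial (k+1) : ℝ) ≠ 0 := Nat.cast_ne_zero.mpr (Nat.factorial_ne_zero _)
    have f2 : (Nat.factorial (n-k) : ℝ) ≠ 0 := Nat.cast_ne_zero.mpr (Nat.factorial_ne_zero _)
    have f3 : (Nat.factorial (n+1) : ℝ) ≠ 0 := Nat.cast_ne_zero.mpr (Nat.factorial_ne_zero _)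
    rw [hns, hc]
    field_simp
  calc ∑ p ∈ Finset.HasAntidiagonal.antidiagonal n,
      ((1:ℝ) / (Nat.factorial (p.1+1) : ℝ)) * ((-1:ℝ) ^ p.2 / (Nat.factorial p.2 : ℝ))
      = ∑ k ∈ Finset.range (n+1),
        ((1:ℝ) / (Nat.factorial (k+1) : ℝ)) * ((-1:ℝ) ^ (n-k) / (Nat.factorial (n-k) : ℝ)) :=
      Finset.Nat.sum_antidiagonal_eq_sum_range_succ_mk _ n
    _ = ∑ k ∈ Finset.range (n+1),
        ((-1:ℝ) ^ n / (Nat.factorial (n+1) : ℝ)) * ((-1:ℝ) ^ k * (((n+1).choose (k+1) : ℕ) : ℝ)) :=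
      Finset.sum_congr rfl key
    _ = (-1:ℝ) ^ n / (Nat.factorial (n+1) : ℝ) := by
      rw [← Finset.mul_sum, alt_choose_sum, mul_one]

private lemma pineg_mul_exp : PiMap (-a) * NormedSpace.exp (-a) = PiMap a := by
  rw [piMap_neg_eq, exp_neg_eq,
    tsum_mul_tsum_eq_tsum_sum_antidiagonal_of_summable_norm (S_pineg_norm a) (S_exp_norm a),
    PiMap]
  apply tsum_congr; intro n
  have key : ∀ p ∈ Finset.HasAntidiagonal.antidiagonal n,
      ((1:ℝ) / (Nat.factorial (p.1+1) : ℝ)) • a ^ p.1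
        * (((-1:ℝ) ^ p.2 / (Nat.factorial p.2 : ℝ)) • a ^ p.2)
      = (((1:ℝ) / (Nat.factorial (p.1+1) : ℝ)) * ((-1:ℝ) ^ p.2 / (Nat.factorial p.2 : ℝ))) • a ^ n := by
    intro p hp
    rw [smul_mul_smul_comm, ← pow_add, Finset.HasAntidiagonal.mem_antidiagonal.mp hp]
  refine Eq.trans (Finset.sum_congr rfl key) ?_
  rw [← Finset.sum_smul, scalar_id]

end Cauchy

section Skew
variable {X : Type*} [NormedAddCommGroup X] [InnerProductSpace ℝ X] [FiniteDimensional ℝ X]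
variable (a : X →L[ℝ] X)

private lemma inner_pow_skew (ha : ∀ v w : X, ⟪a v, w⟫ = -⟪v, a w⟫) (n : ℕ) (v w : X) :
    ⟪v, (a ^ n) w⟫ = ⟪((-a) ^ n) v, w⟫ := by
  induction n generalizing w with
  | zero => simp
  | succ n ih =>
      rw [pow_succ, ContinuousLinearMap.mul_apply, ih (a w), pow_succ',
        ContinuousLinearMap.mul_apply, ContinuousLinearMap.neg_apply, inner_neg_left]
      have := ha (((-a) ^ n) v) w
      linarith

private lemma inner_series_skew (ha : ∀ v w : X, ⟪a v, w⟫ = -⟪v, a w⟫) (c : ℕ → ℝ)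
    (hs : Summable fun n => c n • a ^ n) (hs' : Summable fun n => c n • (-a) ^ n) (v w : X) :
    ⟪v, (∑' n, c n • a ^ n) w⟫ = ⟪(∑' n, c n • (-a) ^ n) v, w⟫ := by
  have e1 : (∑' n, c n • a ^ n) w = ∑' n, (c n • a ^ n) w := tsum_apply_aux hs w
  have e2 : (∑' n, c n • (-a) ^ n) v = ∑' n, (c n • (-a) ^ n) v := tsum_apply_aux hs' v
  have e3 : ⟪v, ∑' n, (c n • a ^ n) w⟫ = ∑' n, ⟪v, (c n • a ^ n) w⟫ :=
    inner_tsum_aux (summable_apply_aux hs w) v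
  have e4 : ⟪w, ∑' n, (c n • (-a) ^ n) v⟫ = ∑' n, ⟪w, (c n • (-a) ^ n) v⟫ :=
    inner_tsum_aux (summable_apply_aux hs' v) w
  have e5 : ∀ n : ℕ, ⟪v, (c n • a ^ n) w⟫ = ⟪w, (c n • (-a) ^ n) v⟫ := by
    intro n
    rw [ContinuousLinearMap.smul_apply, ContinuousLinearMap.smul_apply,
      real_inner_smul_right, real_inner_smul_right, inner_pow_skew a ha n v w,
      real_inner_comm (((-a) ^ n) v) w]
  rw [e1, e3, tsum_congr e5, ← e4, real_inner_comm w, ← e2]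

private lemma adj_pi (ha : ∀ v w : X, ⟪a v, w⟫ = -⟪v, a w⟫) (v w : X) :
    ⟪v, PiMap a w⟫ = ⟪PiMap (-a) v, w⟫ := by
  rw [PiMap]
  exact inner_series_skew a ha _ (S_pi a) (S_pi (-a)) v w

private lemma comm_a_pi : Commute a (PiMap a) := by
  rw [PiMap]
  exact commute_series a a (Commute.refl a) _ (S_pi a)

private lemma comm_pi_pineg : Commute (PiMap a) (PiMap (-a)) := by
  have h1 : Commute (-a) (PiMap a) := by
    rw [PiMap]
    exact commute_series (-a) a ((Commute.refl a).neg_left) _ (S_pi a)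
  show Commute (PiMap a) (∑' n : ℕ, (((-1:ℝ) ^ n / (Nat.factorial (n+1) : ℝ)) • (-a) ^ n))
  exact commute_series (PiMap a) (-a) h1.symm _ (S_pi (-a))

end Skew

section MainAux
variable {X : Type*} [NormedAddCommGroup X] [InnerProductSpace ℝ X] [FiniteDimensional ℝ X]
variable (a : X →L[ℝ] X)

private lemma vec_id (ξ : X) :
    sinhQuot a (a ξ) + PiMap (-a) ((2⁻¹ : ℝ) • (ξ + NormedSpace.exp (-a) ξ)) = ξ := by
  have h1 : sinhQuot a (a ξ) = ξ - Qop a ξ := by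
    have h := congrArg (fun T : X →L[ℝ] X => T ξ) (sinh_mul_a a)
    simpa using h
  have h2 : PiMap (-a) (NormedSpace.exp (-a) ξ) = PiMap a ξ := by
    have h := congrArg (fun T : X →L[ℝ] X => T ξ) (pineg_mul_exp a)
    simpa using h
  have h3 : PiMap a ξ + PiMap (-a) ξ = Qop a ξ + Qop a ξ := by
    have h := congrArg (fun T : X →L[ℝ] X => T ξ) (pi_add_pineg a)
    simpa using h
  rw [map_smul, map_add, h2, h1]
  have h4 : (2⁻¹ : ℝ) • (PiMap (-a) ξ + PiMap a ξ) = Qop a ξ := by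
    rw [add_comm (PiMap (-a) ξ), h3, ← two_smul ℝ (Qop a ξ), smul_smul]
    norm_num
  rw [h4]
  abel

end MainAux


/-- for skew-adjoint `a`, every element `(aξ, ξ)` of the graph `Gr_a`
is `(Π_a, -ϖ_a)`-related to `e_{exp a}(ξ) = ((I - e^{-a})ξ, (I + e^{-a})ξ/2)`;
moreover the morphism `(Π_a, -ϖ_a)` has trivial kernel on `Gr_a` iff `Π_a` is
invertible. -/
theorem exp_Dirac_morphism
    {X : Type*} [NormedAddCommGroup X] [InnerProductSpace ℝ X] [FiniteDimensional ℝ X]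
    (a : X →L[ℝ] X) (ha : ∀ v w : X, ⟪a v, w⟫ = -⟪v, a w⟫) :
    (∀ ξ : X, expRel a (a ξ, ξ)
        (ξ - NormedSpace.exp (-a) ξ, (2⁻¹ : ℝ) • (ξ + NormedSpace.exp (-a) ξ))) ∧
    ((∀ ξ : X, expRel a (a ξ, ξ) 0 → ξ = 0) ↔ Function.Bijective (PiMap a)) := by
  constructor
  · intro ξ
    unfold expRel varpiForm
    constructor
    · show ξ - NormedSpace.exp (-a) ξ = PiMap a (a ξ)
      have h := congrArg (fun T : X →L[ℝ] X => T ξ) (pi_mul_a a)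
      simpa using h.symm
    · intro u
      show ⟪ξ, u⟫ = - -⟪sinhQuot a (a ξ), u⟫
          + ⟪(2⁻¹ : ℝ) • (ξ + NormedSpace.exp (-a) ξ), PiMap a u⟫
      rw [neg_neg, adj_pi a ha ((2⁻¹ : ℝ) • (ξ + NormedSpace.exp (-a) ξ)) u,
        ← inner_add_left, vec_id a ξ]
  · constructor
    · intro h
      have hker : ∀ ξ : X, PiMap a ξ = 0 → ξ = 0 := by
        intro ξ h0
        have hg1 : PiMap a (a ξ) = 0 := by
          have hc := congrArg (fun T : X →L[ℝ] X => T ξ) (comm_a_pi a).eq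
          simp only [ContinuousLinearMap.mul_apply] at hc
          rw [← hc, h0, map_zero]
        have hg2 : PiMap (-a) ξ = 0 := by
          have hcm := congrArg (fun T : X →L[ℝ] X => T ξ) (comm_pi_pineg a).eq
          simp only [ContinuousLinearMap.mul_apply] at hcm
          have h4 : PiMap a (PiMap (-a) ξ) = 0 := by rw [hcm, h0, map_zero]
          have h5 := adj_pi a ha ξ (PiMap (-a) ξ)
          rw [h4, inner_zero_right] at h5
          exact inner_self_eq_zero.mp h5.symm
        have hq : Qop a ξ = 0 := by
          have h3 := congrArg (fun T : X →L[ℝ] X => T ξ) (pi_add_pineg a)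
          simp only [ContinuousLinearMap.add_apply] at h3
          rw [h0, hg2, add_zero] at h3
          have h7 : (2:ℝ) • Qop a ξ = 0 := by rw [two_smul]; exact h3.symm
          rcases smul_eq_zero.mp h7 with h8 | h8
          · norm_num at h8
          · exact h8
        have hsinh : sinhQuot a (a ξ) = ξ := by
          have hs := congrArg (fun T : X →L[ℝ] X => T ξ) (sinh_mul_a a)
          simp only [ContinuousLinearMap.mul_apply, ContinuousLinearMap.sub_apply,
            ContinuousLinearMap.one_apply] at hs
          rw [hs, hq, sub_zero]
        apply h ξ
        unfold expRel varpiForm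
        refine ⟨?_, ?_⟩
        · show (0 : X × X).1 = PiMap a (a ξ)
          rw [hg1]
          rfl
        · intro u
          show ⟪ξ, u⟫ = - -⟪sinhQuot a (a ξ), u⟫ + ⟪(0 : X × X).2, PiMap a u⟫
          rw [neg_neg, hsinh]
          simp
      have hinj : Function.Injective (PiMap a) := by
        intro x y hxy
        have hz := hker (x - y) (by rw [map_sub, hxy, sub_self])
        exact sub_eq_zero.mp hz
      exact ⟨hinj, (LinearMap.injective_iff_surjective (f := (PiMap a : X →ₗ[ℝ] X))).mp hinj⟩
    · intro hbij ξ hrel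
      obtain ⟨h1, h2⟩ := hrel
      have haξ : a ξ = 0 := by
        apply hbij.injective
        rw [map_zero]
        exact h1.symm
      have h3 := h2 ξ
      unfold varpiForm at h3
      rw [neg_neg, haξ, map_zero] at h3
      simp only [inner_zero_left, Prod.snd_zero, add_zero, zero_add] at h3
      exact inner_self_eq_zero.mp h3
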